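/- Let τ>0, let g : ℝ → ℝ be increasing and continuous, let T>0 and N ≥ 1. Let u, v : [−τ,T]×ℝ^N → ℝ be bounded continuous functions that are C¹ in t and C² in x on (0,T)×ℝ^N, and assume that for all (t,x) ∈ (0,T)×ℝ^N: ∂_t u(t,x) − Δu(t,x) + u(t,x) − g(u(t−τ,x)) ≤ 0 and ∂_t v(t,x) − Δv(t,x) + v(t,x) − g(v(t−τ,x)) ≥ 0, where Δ is the Laplacian in the x variable. If u(θ,x) ≤ v(θ,x) for all (θ,x) ∈ [−τ,0]×ℝ^N, then u(t,x) ≤ v(t,x) for all (t,x) ∈ [−τ,T]×ℝ^N. -/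

import Mathlib

open Set Filter Metric
open scoped Topology BigOperators

/-- The Laplacian of a function on `ℝ^N`, as a sum of pure second derivatives. -/
noncomputable def lap {N : ℕ} (g : EuclideanSpace ℝ (Fin N) → ℝ)
    (x : EuclideanSpace ℝ (Fin N)) : ℝ :=
  ∑ i : Fin N, iteratedFDeriv ℝ 2 g x ![EuclideanSpace.single i 1, EuclideanSpace.single i 1]

lemma line_deriv {E : Type*} [NormedAddCommGroup E] [NormedSpace ℝ E]
    (f : E → ℝ) (hf : ContDiff ℝ 2 f) (x₀ h : E) :
    (∀ s : ℝ, HasDerivAt (fun s : ℝ => f (x₀ + s • h)) (fderiv ℝ f (x₀ + s • h) h) s) ∧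
    HasDerivAt (fun s : ℝ => fderiv ℝ f (x₀ + s • h) h)
      (iteratedFDeriv ℝ 2 f x₀ ![h, h]) 0 := by
  have hL : ∀ s : ℝ, HasDerivAt (fun s : ℝ => x₀ + s • h) h s := by
    intro s
    simpa using (((hasDerivAt_id s).smul_const h).const_add x₀)
  constructor
  · intro s
    have := ((hf.differentiable (by norm_num) (x₀ + s • h)).hasFDerivAt).comp_hasDerivAt s (hL s)
    exact this
  · have hfd : ContDiff ℝ 1 (fderiv ℝ f) := hf.fderiv_right (by norm_num)
    have h0 : x₀ + (0:ℝ) • h = x₀ := by simp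
    have h1 : HasFDerivAt (fderiv ℝ f) (fderiv ℝ (fderiv ℝ f) x₀) (x₀ + (0:ℝ) • h) := by
      rw [h0]; exact (hfd.differentiable (by norm_num) x₀).hasFDerivAt
    have h2 := h1.comp_hasDerivAt 0 (hL 0)
    have h3 := h2.clm_apply (hasDerivAt_const (0:ℝ) h)
    rw [iteratedFDeriv_two_apply]
    simpa [Function.comp_def, h0] using h3

lemma secondTest {F F' : ℝ → ℝ} {c : ℝ}
    (hF : ∀ s, HasDerivAt F (F' s) s) (hF' : HasDerivAt F' c 0)
    (hmax : ∀ s, F s ≤ F 0) : c ≤ 0 := by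
  by_contra hc
  push_neg at hc
  have hF'0 : F' 0 = 0 := by
    have : IsLocalMax F 0 := Filter.Eventually.of_forall hmax
    exact this.hasDerivAt_eq_zero (hF 0)
  have hslope := hasDerivAt_iff_tendsto_slope.1 hF'
  have hslope' : Tendsto (slope F' 0) (𝓝[>] 0) (𝓝 c) :=
    hslope.mono_left (nhdsWithin_mono _ (by intro x hx; simpa using ne_of_gt hx))
  have hev : ∀ᶠ s in 𝓝[>] (0:ℝ), 0 < slope F' 0 s :=
    hslope'.eventually (eventually_gt_nhds hc)
  obtain ⟨δ, hδ, hδ'⟩ := mem_nhdsGT_iff_exists_Ioo_subset.1 hev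
  have hpos : ∀ s ∈ Ioo (0:ℝ) δ, 0 < F' s := by
    intro s hs
    have h := hδ' hs
    have hs0 : (0:ℝ) < s := hs.1
    have h2 : 0 < F' s / s := by simpa [slope, hF'0, div_eq_inv_mul] using h
    have h3 := mul_pos h2 hs0
    rwa [div_mul_cancel₀ _ hs0.ne'] at h3
  have hmono : StrictMonoOn F (Icc 0 δ) := by
    apply strictMonoOn_of_deriv_pos (convex_Icc 0 δ)
    · exact fun x _ => (hF x).differentiableAt.continuousAt.continuousWithinAt
    · intro x hx
      rw [interior_Icc] at hx
      rw [(hF x).deriv]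
      exact hpos x hx
  have hδ0 : (0:ℝ) < δ := hδ
  have := hmono (left_mem_Icc.2 hδ0.le) ⟨hδ0.le, le_rfl⟩ hδ0
  exact absurd (hmax δ) (by linarith)

lemma leftDeriv_nonneg {Φ : ℝ → ℝ} {m c t₀ : ℝ} (hc : c < t₀)
    (hmax : ∀ t ∈ Ioo c t₀, Φ t ≤ Φ t₀) (hd : HasDerivAt Φ m t₀) : 0 ≤ m := by
  have hslope := hasDerivAt_iff_tendsto_slope.1 hd
  have hslope' : Tendsto (slope Φ t₀) (𝓝[<] t₀) (𝓝 m) :=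
    hslope.mono_left (nhdsWithin_mono _ (by intro x hx; simpa using ne_of_lt hx))
  refine ge_of_tendsto hslope' ?_
  filter_upwards [Ioo_mem_nhdsLT_of_mem (⟨hc, le_rfl⟩ : t₀ ∈ Ioc c t₀)] with t ht
  have h1 : Φ t - Φ t₀ ≤ 0 := by linarith [hmax t ht]
  have h2 : t - t₀ < 0 := by linarith [ht.2]
  have h3 : 0 ≤ (Φ t - Φ t₀) / (t - t₀) := div_nonneg_iff.2 (Or.inr ⟨h1, h2.le⟩)
  simpa [slope, div_eq_inv_mul] using h3

set_option maxHeartbeats 1000000 in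
lemma key_step {N : ℕ} (τ T : ℝ) (hτ : 0 < τ) (hT : 0 < T)
    (g : ℝ → ℝ) (hg : StrictMono g)
    (u v : ℝ → EuclideanSpace ℝ (Fin N) → ℝ)
    (hu_cont : ContinuousOn (fun p : ℝ × EuclideanSpace ℝ (Fin N) => u p.1 p.2)
      (Icc (-τ) T ×ˢ univ))
    (hv_cont : ContinuousOn (fun p : ℝ × EuclideanSpace ℝ (Fin N) => v p.1 p.2)
      (Icc (-τ) T ×ˢ univ))
    (M : ℝ) (hM : ∀ t ∈ Icc (-τ) T, ∀ x, |u t x - v t x| ≤ M)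
    (hu_reg : ∀ t ∈ Ioo 0 T, (∀ x, DifferentiableAt ℝ (fun s => u s x) t) ∧ ContDiff ℝ 2 (u t))
    (hv_reg : ∀ t ∈ Ioo 0 T, (∀ x, DifferentiableAt ℝ (fun s => v s x) t) ∧ ContDiff ℝ 2 (v t))
    (hsub : ∀ t ∈ Ioo 0 T, ∀ x,
      deriv (fun s => u s x) t - lap (u t) x + u t x - g (u (t - τ) x) ≤ 0)
    (hsup : ∀ t ∈ Ioo 0 T, ∀ x,
      0 ≤ deriv (fun s => v s x) t - lap (v t) x + v t x - g (v (t - τ) x))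
    (hinit : ∀ θ ∈ Icc (-τ) 0, ∀ x, u θ x ≤ v θ x)
    (a : ℝ) (ha0 : 0 ≤ a) (haT : a ≤ T)
    (hind : ∀ t ∈ Icc (-τ) a, ∀ x, u t x ≤ v t x) :
    ∀ t ∈ Icc (-τ) (min (a + τ) T), ∀ x, u t x ≤ v t x := by
  have main_lt : ∀ t₁, a < t₁ → t₁ < min (a + τ) T → ∀ x₁, u t₁ x₁ ≤ v t₁ x₁ := by
    intro t₁ hat₁ ht₁b x₁
    by_contra hcon
    push_neg at hcon
    have ht₁T : t₁ < T := lt_of_lt_of_le ht₁b (min_le_right _ _)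
    have ht₁0 : 0 < t₁ := lt_of_le_of_lt ha0 hat₁
    have ht₁mem : t₁ ∈ Icc (-τ) T := ⟨by linarith, ht₁T.le⟩
    set d : ℝ := u t₁ x₁ - v t₁ x₁ with hd_def
    have hd : 0 < d := by simp only [hd_def]; linarith
    set K : ℝ := 2 * N + 1 with hK
    have hKpos : 0 < K := by positivity
    set C : ℝ := K * t₁ + ‖x₁‖ ^ 2 with hC
    have hC0 : 0 ≤ C := by positivity
    set ε : ℝ := d / (2 * (C + 1)) with hε
    have hεpos : 0 < ε := div_pos hd (by positivity)
    have hεC : ε * C ≤ d / 2 := by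
      have h1 : ε * (C + 1) = d / 2 := by rw [hε]; field_simp
      nlinarith [h1, hεpos]
    set ψ : ℝ → EuclideanSpace ℝ (Fin N) → ℝ :=
      fun t x => u t x - v t x - ε * (K * t + ‖x‖ ^ 2) with hψ
    have hψt₁ : d / 2 ≤ ψ t₁ x₁ := by
      simp only [hψ, ← hd_def, ← hC]
      linarith
    have hM0 : 0 ≤ M := le_trans (abs_nonneg _) (hM t₁ ht₁mem x₁)
    clear_value d K C ε ψ
    set R : ℝ := Real.sqrt ((M + 1) / ε) with hR
    have hεne : ε ≠ 0 := ne_of_gt hεpos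
    have hRsq : ε * R ^ 2 = M + 1 := by
      rw [hR, Real.sq_sqrt (div_nonneg (by linarith) hεpos.le)]
      field_simp
    clear_value R
    have hR0 : 0 ≤ R := hR ▸ Real.sqrt_nonneg _
    have hfar : ∀ t ∈ Icc 0 t₁, ∀ x : EuclideanSpace ℝ (Fin N), R < ‖x‖ → ψ t x ≤ 0 := by
      intro t ht x hx
      have h1 : |u t x - v t x| ≤ M := hM t ⟨by linarith [ht.1], le_trans ht.2 ht₁T.le⟩ x
      have h2 : M + 1 < ε * ‖x‖ ^ 2 := by
        rw [← hRsq]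
        have hRx : R ^ 2 < ‖x‖ ^ 2 := by nlinarith
        exact mul_lt_mul_of_pos_left hRx hεpos
      have h3 : 0 ≤ ε * (K * t) := mul_nonneg hεpos.le (mul_nonneg hKpos.le ht.1)
      have h4 := abs_le.1 h1
      simp only [hψ]
      nlinarith
    have hx₁R : ‖x₁‖ ≤ R := by
      have h1 : ε * ‖x₁‖ ^ 2 ≤ d / 2 := by
        have hx2C : ‖x₁‖ ^ 2 ≤ C := by nlinarith [mul_nonneg hKpos.le ht₁0.le]
        have := mul_le_mul_of_nonneg_left hx2C hεpos.le
        linarith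
      have h2 : d ≤ M := hd_def ▸ le_trans (le_abs_self _) (hM t₁ ht₁mem x₁)
      rw [hR]
      rw [Real.le_sqrt (norm_nonneg _) (div_nonneg (by linarith) hεpos.le)]
      rw [le_div_iff₀ hεpos]
      nlinarith
    set Kc : Set (ℝ × EuclideanSpace ℝ (Fin N)) := Icc 0 t₁ ×ˢ closedBall 0 R with hKc
    have hKcomp : IsCompact Kc := isCompact_Icc.prod (isCompact_closedBall _ _)
    have hx₁ball : x₁ ∈ closedBall (0 : EuclideanSpace ℝ (Fin N)) R := by
      simpa [mem_closedBall, dist_eq_norm] using hx₁R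
    have hKne : Kc.Nonempty := ⟨(t₁, x₁), Set.mem_prod.2 ⟨⟨ht₁0.le, le_rfl⟩, hx₁ball⟩⟩
    have hsubset : Kc ⊆ Icc (-τ) T ×ˢ (univ : Set (EuclideanSpace ℝ (Fin N))) := by
      rintro ⟨t, x⟩ ⟨ht, hx⟩
      exact ⟨⟨by linarith [ht.1], le_trans ht.2 ht₁T.le⟩, mem_univ _⟩
    have hψcont : ContinuousOn (fun p : ℝ × EuclideanSpace ℝ (Fin N) => ψ p.1 p.2) Kc := by
      simp only [hψ]
      apply ContinuousOn.sub
      · exact (hu_cont.mono hsubset).sub (hv_cont.mono hsubset)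
      · apply Continuous.continuousOn
        exact continuous_const.mul ((continuous_const.mul continuous_fst).add
          ((continuous_snd.norm).pow 2))
    obtain ⟨⟨t₀, x₀⟩, hp₀K, hp₀max⟩ := hKcomp.exists_isMaxOn hKne hψcont
    have hmax' : ∀ p ∈ Kc, ψ p.1 p.2 ≤ ψ t₀ x₀ := isMaxOn_iff.1 hp₀max
    have ht₀mem : t₀ ∈ Icc 0 t₁ := hp₀K.1
    have hglob : ∀ t ∈ Icc 0 t₁, ∀ x : EuclideanSpace ℝ (Fin N), ψ t x ≤ ψ t₀ x₀ := by
      intro t ht x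
      by_cases hx : x ∈ closedBall (0 : EuclideanSpace ℝ (Fin N)) R
      · exact hmax' (t, x) (Set.mem_prod.2 ⟨ht, hx⟩)
      · have h1 := hfar t ht x (by simpa [mem_closedBall, dist_eq_norm, not_le] using hx)
        have h2 : ψ t₁ x₁ ≤ ψ t₀ x₀ := hmax' (t₁, x₁) (Set.mem_prod.2 ⟨⟨ht₁0.le, le_rfl⟩, hx₁ball⟩)
        linarith
    have hψ0pos : 0 < ψ t₀ x₀ := by
      have := hglob t₁ ⟨ht₁0.le, le_rfl⟩ x₁
      linarith
    have ht₀pos : 0 < t₀ := by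
      rcases eq_or_lt_of_le ht₀mem.1 with h | h
      · exfalso
        have h1 : u 0 x₀ ≤ v 0 x₀ := hinit 0 ⟨by linarith, le_rfl⟩ x₀
        have h2 : ψ t₀ x₀ ≤ 0 := by
          rw [← h]
          simp only [hψ]
          nlinarith [mul_nonneg hεpos.le (pow_nonneg (norm_nonneg x₀) 2), h1,
            mul_nonneg hεpos.le (mul_nonneg hKpos.le (le_refl (0:ℝ)))]
        linarith
      · exact h
    have ht₀T : t₀ ∈ Ioo 0 T := ⟨ht₀pos, lt_of_le_of_lt ht₀mem.2 ht₁T⟩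
    obtain ⟨hu_t, hu_x⟩ := hu_reg t₀ ht₀T
    obtain ⟨hv_t, hv_x⟩ := hv_reg t₀ ht₀T
    set u' : ℝ := deriv (fun s => u s x₀) t₀ with hu'
    set v' : ℝ := deriv (fun s => v s x₀) t₀ with hv'
    have hΦ : HasDerivAt (fun t => ψ t x₀) (u' - v' - ε * K) t₀ := by
      have h1 : HasDerivAt (fun s => u s x₀) u' t₀ := (hu_t x₀).hasDerivAt
      have h2 : HasDerivAt (fun s => v s x₀) v' t₀ := (hv_t x₀).hasDerivAt
      have h3 : HasDerivAt (fun t : ℝ => ε * (K * t + ‖x₀‖ ^ 2)) (ε * K) t₀ := by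
        have := (((hasDerivAt_id t₀).const_mul K).add_const (‖x₀‖ ^ 2)).const_mul ε
        simpa using this
      rw [hψ]; exact (h1.sub h2).sub h3
    have htime : 0 ≤ u' - v' - ε * K :=
      leftDeriv_nonneg ht₀pos
        (fun t ht => hglob t ⟨ht.1.le, le_trans ht.2.le ht₀mem.2⟩ x₀) hΦ
    have hspace : lap (u t₀) x₀ - lap (v t₀) x₀ ≤ 2 * N * ε := by
      have hi : ∀ i : Fin N,
          iteratedFDeriv ℝ 2 (u t₀) x₀ ![EuclideanSpace.single i 1, EuclideanSpace.single i 1]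
          - iteratedFDeriv ℝ 2 (v t₀) x₀ ![EuclideanSpace.single i 1, EuclideanSpace.single i 1]
          ≤ 2 * ε := by
        intro i
        set e : EuclideanSpace ℝ (Fin N) := EuclideanSpace.single i (1:ℝ) with he
        obtain ⟨hU1, hU2⟩ := line_deriv (u t₀) hu_x x₀ e
        obtain ⟨hV1, hV2⟩ := line_deriv (v t₀) hv_x x₀ e
        have hq : ∀ s : ℝ, ‖x₀ + s • e‖ ^ 2
            = ‖x₀‖ ^ 2 + ((2 * inner ℝ x₀ e) * s + s ^ 2) := by
          intro s
          rw [norm_add_sq_real, real_inner_smul_right]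
          have hns : ‖s • e‖ ^ 2 = s ^ 2 := by
            rw [norm_smul, he, EuclideanSpace.norm_single]
            simp [mul_pow, sq_abs]
          rw [hns]; ring
        have hFeq : (fun s : ℝ => ψ t₀ (x₀ + s • e))
            = fun s : ℝ => u t₀ (x₀ + s • e) - v t₀ (x₀ + s • e)
              - ε * (K * t₀ + (‖x₀‖ ^ 2 + ((2 * inner ℝ x₀ e) * s + s ^ 2))) := by
          funext s
          simp only [hψ]
          rw [hq s]
        have hd1 : ∀ s : ℝ, HasDerivAt (fun s : ℝ => ψ t₀ (x₀ + s • e))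
            (fderiv ℝ (u t₀) (x₀ + s • e) e - fderiv ℝ (v t₀) (x₀ + s • e) e
              - ε * ((2 * inner ℝ x₀ e) + 2 * s)) s := by
          intro s
          rw [hFeq]
          have ha : HasDerivAt (fun s : ℝ => (2 * inner ℝ x₀ e) * s) (2 * inner ℝ x₀ e) s := by
            simpa using (hasDerivAt_id s).const_mul (2 * inner ℝ x₀ e : ℝ)
          have hb : HasDerivAt (fun s : ℝ => s ^ 2) (2 * s) s := by
            simpa using hasDerivAt_pow 2 s
          have hpoly := (((ha.add hb).const_add (‖x₀‖ ^ 2)).const_add (K * t₀)).const_mul ε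
          exact ((hU1 s).sub (hV1 s)).sub hpoly
        have hd2 : HasDerivAt (fun s : ℝ => fderiv ℝ (u t₀) (x₀ + s • e) e
              - fderiv ℝ (v t₀) (x₀ + s • e) e - ε * ((2 * inner ℝ x₀ e) + 2 * s))
            (iteratedFDeriv ℝ 2 (u t₀) x₀ ![e, e]
              - iteratedFDeriv ℝ 2 (v t₀) x₀ ![e, e] - ε * 2) 0 := by
          have hpoly : HasDerivAt (fun s : ℝ => ε * ((2 * inner ℝ x₀ e) + 2 * s)) (ε * 2) 0 := by
            have := (((hasDerivAt_id (0:ℝ)).const_mul (2:ℝ)).const_add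
              (2 * inner ℝ x₀ e : ℝ)).const_mul ε
            simpa using this
          exact (hU2.sub hV2).sub hpoly
        have hmaxF : ∀ s : ℝ, (fun s : ℝ => ψ t₀ (x₀ + s • e)) s
            ≤ (fun s : ℝ => ψ t₀ (x₀ + s • e)) 0 := by
          intro s
          simp only [zero_smul, add_zero]
          exact hglob t₀ ht₀mem (x₀ + s • e)
        have hfin := secondTest hd1 hd2 hmaxF
        linarith
      have h2 : lap (u t₀) x₀ - lap (v t₀) x₀
          = ∑ i : Fin N,
            (iteratedFDeriv ℝ 2 (u t₀) x₀ ![EuclideanSpace.single i 1, EuclideanSpace.single i 1]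
            - iteratedFDeriv ℝ 2 (v t₀) x₀
              ![EuclideanSpace.single i 1, EuclideanSpace.single i 1]) := by
        simp [lap, Finset.sum_sub_distrib]
      rw [h2]
      calc ∑ i : Fin N, (iteratedFDeriv ℝ 2 (u t₀) x₀
              ![EuclideanSpace.single i 1, EuclideanSpace.single i 1]
            - iteratedFDeriv ℝ 2 (v t₀) x₀
              ![EuclideanSpace.single i 1, EuclideanSpace.single i 1])
          ≤ ∑ _i : Fin N, 2 * ε := Finset.sum_le_sum (fun i _ => hi i)
        _ = 2 * N * ε := by
          simp [Finset.sum_const, Finset.card_univ, nsmul_eq_mul]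
          ring
    have hdelay : u (t₀ - τ) x₀ ≤ v (t₀ - τ) x₀ := by
      have hb : min (a + τ) T ≤ a + τ := min_le_left _ _
      exact hind (t₀ - τ) ⟨by linarith [ht₀pos], by linarith [ht₀mem.2]⟩ x₀
    have hgmono : g (u (t₀ - τ) x₀) ≤ g (v (t₀ - τ) x₀) := hg.monotone hdelay
    have hw0 : 0 < u t₀ x₀ - v t₀ x₀ := by
      have h1 : ψ t₀ x₀ ≤ u t₀ x₀ - v t₀ x₀ := by
        simp only [hψ]
        nlinarith [mul_nonneg hεpos.le (add_nonneg (mul_nonneg hKpos.le ht₀pos.le)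
          (pow_nonneg (norm_nonneg x₀) 2))]
      linarith
    have hPDEu := hsub t₀ ht₀T x₀
    have hPDEv := hsup t₀ ht₀T x₀
    have hεK : ε * K = 2 * N * ε + ε := by rw [hK]; ring
    rw [← hu'] at hPDEu
    rw [← hv'] at hPDEv
    clear_value u' v'
    linarith
  intro t ht x
  rcases le_or_gt t a with h | h
  · exact hind t ⟨ht.1, h⟩ x
  · have htb : t ≤ min (a + τ) T := ht.2
    have htT : t ∈ Icc (-τ) T := ⟨ht.1, le_trans htb (min_le_right _ _)⟩
    have hIoosub : Ioo a t ⊆ Icc (-τ) T := by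
      intro s hs
      exact ⟨by linarith [hs.1], le_trans hs.2.le htT.2⟩
    have hcu : ContinuousOn (fun s => u s x) (Icc (-τ) T) := by
      have hc : ContinuousOn (fun s : ℝ => ((s, x) : ℝ × EuclideanSpace ℝ (Fin N)))
          (Icc (-τ) T) := (continuous_id.prodMk continuous_const).continuousOn
      exact hu_cont.comp hc (fun s hs => ⟨hs, mem_univ x⟩)
    have hcv : ContinuousOn (fun s => v s x) (Icc (-τ) T) := by
      have hc : ContinuousOn (fun s : ℝ => ((s, x) : ℝ × EuclideanSpace ℝ (Fin N)))
          (Icc (-τ) T) := (continuous_id.prodMk continuous_const).continuousOn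
      exact hv_cont.comp hc (fun s hs => ⟨hs, mem_univ x⟩)
    have hne : (𝓝[Ioo a t] t).NeBot := by
      rw [← mem_closure_iff_nhdsWithin_neBot, closure_Ioo (ne_of_lt h)]
      exact ⟨h.le, le_rfl⟩
    have hlim : Tendsto (fun s => u s x - v s x) (𝓝[Ioo a t] t) (𝓝 (u t x - v t x)) := by
      have h1 := ((hcu t htT).sub (hcv t htT)).mono hIoosub
      exact h1
    have hle : u t x - v t x ≤ 0 := by
      refine le_of_tendsto hlim ?_
      filter_upwards [eventually_mem_nhdsWithin] with s hs
      have := main_lt s hs.1 (lt_of_lt_of_le hs.2 htb) x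
      linarith
    linarith

/-- Comparison principle for monotone delayed reaction–diffusion equations. -/
theorem stmt_0 {N : ℕ} (hN : 1 ≤ N) (τ T : ℝ) (hτ : 0 < τ) (hT : 0 < T)
    (g : ℝ → ℝ) (hg : StrictMono g) (hgc : Continuous g)
    (u v : ℝ → EuclideanSpace ℝ (Fin N) → ℝ)
    (hu_cont : ContinuousOn (fun p : ℝ × EuclideanSpace ℝ (Fin N) => u p.1 p.2)
      (Icc (-τ) T ×ˢ univ))
    (hv_cont : ContinuousOn (fun p : ℝ × EuclideanSpace ℝ (Fin N) => v p.1 p.2)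
      (Icc (-τ) T ×ˢ univ))
    (hu_bdd : ∃ M, ∀ t ∈ Icc (-τ) T, ∀ x, |u t x| ≤ M)
    (hv_bdd : ∃ M, ∀ t ∈ Icc (-τ) T, ∀ x, |v t x| ≤ M)
    (hu_reg : ∀ t ∈ Ioo 0 T, (∀ x, DifferentiableAt ℝ (fun s => u s x) t) ∧ ContDiff ℝ 2 (u t))
    (hv_reg : ∀ t ∈ Ioo 0 T, (∀ x, DifferentiableAt ℝ (fun s => v s x) t) ∧ ContDiff ℝ 2 (v t))
    (hsub : ∀ t ∈ Ioo 0 T, ∀ x,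
      deriv (fun s => u s x) t - lap (u t) x + u t x - g (u (t - τ) x) ≤ 0)
    (hsup : ∀ t ∈ Ioo 0 T, ∀ x,
      0 ≤ deriv (fun s => v s x) t - lap (v t) x + v t x - g (v (t - τ) x))
    (hinit : ∀ θ ∈ Icc (-τ) 0, ∀ x, u θ x ≤ v θ x) :
    ∀ t ∈ Icc (-τ) T, ∀ x, u t x ≤ v t x := by
  obtain ⟨Mu, hMu⟩ := hu_bdd
  obtain ⟨Mv, hMv⟩ := hv_bdd
  have hM : ∀ t ∈ Icc (-τ) T, ∀ x, |u t x - v t x| ≤ Mu + Mv := fun t ht x =>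
    le_trans (abs_sub _ _) (add_le_add (hMu t ht x) (hMv t ht x))
  have key := key_step τ T hτ hT g hg u v hu_cont hv_cont (Mu + Mv) hM
    hu_reg hv_reg hsub hsup hinit
  have main : ∀ n : ℕ, ∀ t ∈ Icc (-τ) (min ((n : ℝ) * τ) T), ∀ x, u t x ≤ v t x := by
    intro n
    induction n with
    | zero =>
      intro t ht x
      refine hinit t ⟨ht.1, le_trans ht.2 ?_⟩ x
      simp
    | succ n ih =>
      have ha0 : 0 ≤ min ((n : ℝ) * τ) T := le_min (by positivity) hT.le
      have haT : min ((n : ℝ) * τ) T ≤ T := min_le_right _ _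
      have hstep := key (min ((n : ℝ) * τ) T) ha0 haT ih
      intro t ht x
      refine hstep t ⟨ht.1, le_trans ht.2 ?_⟩ x
      have hcast : ((n + 1 : ℕ) : ℝ) * τ = (n : ℝ) * τ + τ := by push_cast; ring
      rw [hcast]
      rcases le_total ((n : ℝ) * τ) T with h | h
      · rw [min_eq_left h]
      · rw [min_eq_right h]
        apply le_min _ (min_le_right _ _)
        calc min ((n : ℝ) * τ + τ) T ≤ T := min_le_right _ _
          _ ≤ T + τ := by linarith
  intro t ht x
  obtain ⟨n, hn⟩ := exists_nat_ge (T / τ)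
  have hnT : T ≤ (n : ℝ) * τ := by
    rw [div_le_iff₀ hτ] at hn
    linarith
  exact main n t ⟨ht.1, by rw [min_eq_right hnT]; exact ht.2⟩ x
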